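/- For p ≥ 2 and 1 ≤ l < p, the intervals satisfy the interlacing order J_{p+1,l+1} ≺ J_{p,l} ≺ J_{p+1,l}, i.e., every point of J_{p+1,l+1} is strictly less than every point of J_{p,l}, which is strictly less than every point of J_{p+1,l}. In particular the 2p+1 intervals J_{p+1,p}, J_{p,p−1}, J_{p+1,p−1}, ..., J_{p+1,2}, J_{p,1}, J_{p+1,1} are pairwise disjoint. -/
import Mathlib


open Real

/-- `ε_{p,l} = 0.1` if `2 ≤ p ≤ 4`, and
`ε_{p,l} = min{0.1, (l+0.1)/(3.92p), (p−l+0.1)/(3.92p)}` if `p ≥ 5`. -/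
noncomputable def eps (p l : ℕ) : ℝ :=
  if p ≤ 4 then 0.1
  else min 0.1 (min (((l : ℝ) + 0.1) / (3.92 * p)) (((p : ℝ) - (l : ℝ) + 0.1) / (3.92 * p)))

/-- `J_{p,l} = {2 cos θ : |θ − lπ/p| ≤ ε_{p,l} π/p}`. -/
noncomputable def Jset (p l : ℕ) : Set ℝ :=
  (fun θ : ℝ => 2 * Real.cos θ) ''
    Set.Icc ((l : ℝ) * π / p - eps p l * π / p) ((l : ℝ) * π / p + eps p l * π / p)

/-- The family `𝒥_p = {J_{p,l} : 1 ≤ l < p} ∪ {J_{p+1,l} : 1 ≤ l < p+1}`. -/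
noncomputable def Jfamily (p : ℕ) : Set (Set ℝ) :=
  {S | (∃ l, 1 ≤ l ∧ l < p ∧ S = Jset p l) ∨ (∃ l, 1 ≤ l ∧ l < p + 1 ∧ S = Jset (p + 1) l)}

/-! ### Auxiliary lemmas -/

noncomputable def JLo (p l : ℕ) : ℝ := (l : ℝ) * π / p - eps p l * π / p
noncomputable def JHi (p l : ℕ) : ℝ := (l : ℝ) * π / p + eps p l * π / p

lemma eps_le (p l : ℕ) : eps p l ≤ 0.1 := by
  unfold eps; split
  · norm_num
  · exact min_le_left _ _

lemma eps_pos {p l : ℕ} (hl : l < p) : 0 < eps p l := by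
  have hp0 : (0:ℝ) < p := by
    have : 0 < p := by omega
    exact_mod_cast this
  have hlp : (l:ℝ) < p := by exact_mod_cast hl
  unfold eps; split
  · norm_num
  · refine lt_min (by norm_num) (lt_min ?_ ?_)
    · apply div_pos
      · positivity
      · positivity
    · apply div_pos
      · linarith
      · positivity

lemma eps_left {p l : ℕ} (hp : 5 ≤ p) : eps p l ≤ ((l:ℝ) + 0.1) / (3.92 * p) := by
  unfold eps
  rw [if_neg (by omega)]
  exact le_trans (min_le_right _ _) (min_le_left _ _)

lemma eps_right {p l : ℕ} (hp : 5 ≤ p) : eps p l ≤ ((p:ℝ) - (l:ℝ) + 0.1) / (3.92 * p) := by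
  unfold eps
  rw [if_neg (by omega)]
  exact le_trans (min_le_right _ _) (min_le_right _ _)

lemma eps_four (l : ℕ) : eps 4 l = 0.1 := by unfold eps; norm_num

lemma arithB {p l : ℕ} (hp : 2 ≤ p) (h1 : 1 ≤ l) (h2 : l < p) :
    (p:ℝ) * eps (p+1) l + ((p:ℝ)+1) * eps p l < l := by
  have hl1 : (1:ℝ) ≤ l := by exact_mod_cast h1
  have hp0 : (0:ℝ) < p := by
    have : 0 < p := by omega
    exact_mod_cast this
  rcases lt_or_ge p 4 with h4 | h4
  · -- p ≤ 3
    have hp3 : (p:ℝ) ≤ 3 := by exact_mod_cast (by omega : p ≤ 3)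
    have e1 := eps_le (p+1) l
    have e2 := eps_le p l
    have b1 : (p:ℝ) * eps (p+1) l ≤ (p:ℝ) * 0.1 := by
      exact mul_le_mul_of_nonneg_left e1 hp0.le
    have b2 : ((p:ℝ)+1) * eps p l ≤ ((p:ℝ)+1) * 0.1 := by
      exact mul_le_mul_of_nonneg_left e2 (by linarith)
    linarith
  · rcases eq_or_lt_of_le h4 with h4e | h5
    · obtain rfl : p = 4 := h4e.symm
      have e1 : eps 5 l ≤ ((l:ℝ) + 0.1) / (3.92 * 5) := by
        have := eps_left (p := 5) (l := l) (by norm_num)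
        simpa using this
      have e2 : eps 4 l = 0.1 := eps_four l
      have : ((4:ℕ):ℝ) = 4 := by norm_num
      rw [show (4:ℕ) + 1 = 5 from rfl, e2, this]
      norm_num at e1 ⊢
      linarith
    · -- 5 ≤ p
      have hp5 : 5 ≤ p := by omega
      have hP : (5:ℝ) ≤ p := by exact_mod_cast hp5
      have e1 : eps (p+1) l ≤ ((l:ℝ) + 0.1) / (3.92 * ((p:ℝ)+1)) := by
        have := eps_left (p := p+1) (l := l) (by omega)
        push_cast at this
        convert this using 2 <;> push_cast <;> ring
      have e2 := eps_left (p := p) (l := l) hp5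
      set X : ℝ := (l:ℝ) + 0.1 with hX
      have hX0 : (0:ℝ) < X := by rw [hX]; linarith
      have b1 : (p:ℝ) * (X / (3.92 * ((p:ℝ)+1))) ≤ X / 3.92 := by
        rw [show (p:ℝ) * (X / (3.92 * ((p:ℝ)+1))) = ((p:ℝ) * X) / (3.92 * ((p:ℝ)+1)) by ring]
        rw [div_le_div_iff₀ (by positivity) (by norm_num)]
        nlinarith
      have b2 : ((p:ℝ)+1) * (X / (3.92 * (p:ℝ))) ≤ (1.2 * X) / 3.92 := by
        rw [show ((p:ℝ)+1) * (X / (3.92 * (p:ℝ))) = (((p:ℝ)+1) * X) / (3.92 * (p:ℝ)) by ring]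
        rw [div_le_div_iff₀ (by positivity) (by norm_num)]
        nlinarith
      have c1 : (p:ℝ) * eps (p+1) l ≤ (p:ℝ) * (X / (3.92 * ((p:ℝ)+1))) :=
        mul_le_mul_of_nonneg_left e1 hp0.le
      have c2 : ((p:ℝ)+1) * eps p l ≤ ((p:ℝ)+1) * (X / (3.92 * (p:ℝ))) :=
        mul_le_mul_of_nonneg_left e2 (by linarith)
      have : X / 3.92 + (1.2 * X) / 3.92 < (l:ℝ) := by
        rw [hX]; norm_num; linarith
      linarith

lemma arithA {p l : ℕ} (hp : 2 ≤ p) (h1 : 1 ≤ l) (h2 : l < p) :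
    (p:ℝ) * eps (p+1) (l+1) + ((p:ℝ)+1) * eps p l < (p:ℝ) - l := by
  have hl1 : (1:ℝ) ≤ l := by exact_mod_cast h1
  have hd1 : (l:ℝ) + 1 ≤ p := by exact_mod_cast h2
  have hp0 : (0:ℝ) < p := by
    have : 0 < p := by omega
    exact_mod_cast this
  rcases lt_or_ge p 4 with h4 | h4
  · have hp3 : (p:ℝ) ≤ 3 := by exact_mod_cast (by omega : p ≤ 3)
    have e1 := eps_le (p+1) (l+1)
    have e2 := eps_le p l
    have b1 : (p:ℝ) * eps (p+1) (l+1) ≤ (p:ℝ) * 0.1 :=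
      mul_le_mul_of_nonneg_left e1 hp0.le
    have b2 : ((p:ℝ)+1) * eps p l ≤ ((p:ℝ)+1) * 0.1 :=
      mul_le_mul_of_nonneg_left e2 (by linarith)
    linarith
  · rcases eq_or_lt_of_le h4 with h4e | h5
    · obtain rfl : p = 4 := h4e.symm
      have e1 : eps 5 (l+1) ≤ ((4:ℝ) - (l:ℝ) + 0.1) / (3.92 * 5) := by
        have := eps_right (p := 5) (l := l+1) (by norm_num)
        push_cast at this
        convert this using 2 <;> push_cast <;> ring
      have e2 : eps 4 l = 0.1 := eps_four l
      have h4c : ((4:ℕ):ℝ) = 4 := by norm_num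
      rw [show (4:ℕ) + 1 = 5 from rfl, e2, h4c]
      norm_num at e1 ⊢
      linarith
    · have hp5 : 5 ≤ p := by omega
      have hP : (5:ℝ) ≤ p := by exact_mod_cast hp5
      have e1 : eps (p+1) (l+1) ≤ (((p:ℝ) - l) + 0.1) / (3.92 * ((p:ℝ)+1)) := by
        have := eps_right (p := p+1) (l := l+1) (by omega)
        push_cast at this
        convert this using 2 <;> push_cast <;> ring
      have e2 : eps p l ≤ (((p:ℝ) - l) + 0.1) / (3.92 * (p:ℝ)) := by
        have := eps_right (p := p) (l := l) hp5
        convert this using 2 <;> ring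
      set X : ℝ := ((p:ℝ) - l) + 0.1 with hX
      have hX0 : (0:ℝ) < X := by rw [hX]; linarith
      have hX1 : (1:ℝ) ≤ (p:ℝ) - l := by linarith
      have b1 : (p:ℝ) * (X / (3.92 * ((p:ℝ)+1))) ≤ X / 3.92 := by
        rw [show (p:ℝ) * (X / (3.92 * ((p:ℝ)+1))) = ((p:ℝ) * X) / (3.92 * ((p:ℝ)+1)) by ring]
        rw [div_le_div_iff₀ (by positivity) (by norm_num)]
        nlinarith
      have b2 : ((p:ℝ)+1) * (X / (3.92 * (p:ℝ))) ≤ (1.2 * X) / 3.92 := by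
        rw [show ((p:ℝ)+1) * (X / (3.92 * (p:ℝ))) = (((p:ℝ)+1) * X) / (3.92 * (p:ℝ)) by ring]
        rw [div_le_div_iff₀ (by positivity) (by norm_num)]
        nlinarith
      have c1 : (p:ℝ) * eps (p+1) (l+1) ≤ (p:ℝ) * (X / (3.92 * ((p:ℝ)+1))) :=
        mul_le_mul_of_nonneg_left e1 hp0.le
      have c2 : ((p:ℝ)+1) * eps p l ≤ ((p:ℝ)+1) * (X / (3.92 * (p:ℝ))) :=
        mul_le_mul_of_nonneg_left e2 (by linarith)
      have : X / 3.92 + (1.2 * X) / 3.92 < (p:ℝ) - l := by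
        rw [hX]; norm_num; linarith
      linarith

lemma JLo_pos {p l : ℕ} (h1 : 1 ≤ l) (h2 : l < p) : 0 < JLo p l := by
  have hp0 : (0:ℝ) < p := by
    have : 0 < p := by omega
    exact_mod_cast this
  have hl1 : (1:ℝ) ≤ l := by exact_mod_cast h1
  have he := eps_le p l
  have key : JLo p l = ((l:ℝ) - eps p l) * (π / p) := by unfold JLo; ring
  rw [key]
  apply mul_pos
  · linarith
  · exact div_pos pi_pos hp0

lemma JHi_le_pi {q m : ℕ} (h2 : m < q) : JHi q m ≤ π := by
  have hq0 : (0:ℝ) < q := by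
    have : 0 < q := by omega
    exact_mod_cast this
  have hm : (m:ℝ) + 1 ≤ q := by exact_mod_cast h2
  have he := eps_le q m
  have key : JHi q m = ((m:ℝ) + eps q m) * (π / q) := by unfold JHi; ring
  rw [key]
  have h3 : ((m:ℝ) + eps q m) ≤ q := by linarith
  have h4 : (q:ℝ) * (π / q) = π := by field_simp
  calc ((m:ℝ) + eps q m) * (π / q) ≤ (q:ℝ) * (π / q) :=
        mul_le_mul_of_nonneg_right h3 (le_of_lt (div_pos pi_pos hq0))
    _ = π := h4

lemma JLo_le_JHi {q m : ℕ} (h2 : m < q) : JLo q m ≤ JHi q m := by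
  have hq0 : (0:ℝ) < q := by
    have : 0 < q := by omega
    exact_mod_cast this
  have he : 0 ≤ eps q m * π / q :=
    div_nonneg (mul_nonneg (eps_pos h2).le pi_pos.le) hq0.le
  unfold JLo JHi
  linarith

/-- `J_{p,l} ≺ J_{p+1,l}` at the level of angle intervals. -/
lemma sepB {p l : ℕ} (hp : 2 ≤ p) (h1 : 1 ≤ l) (h2 : l < p) : JHi (p+1) l < JLo p l := by
  have hA := arithB hp h1 h2
  have hp0 : (0:ℝ) < p := by
    have : 0 < p := by omega
    exact_mod_cast this
  have hp1 : (0:ℝ) < (p:ℝ) + 1 := by linarith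
  unfold JHi JLo
  push_cast
  have key : ((l:ℝ) + eps (p+1) l) / ((p:ℝ)+1) < ((l:ℝ) - eps p l) / p := by
    rw [div_lt_div_iff₀ hp1 hp0]
    nlinarith
  have := mul_lt_mul_of_pos_right key pi_pos
  have e1 : ((l:ℝ) + eps (p+1) l) / ((p:ℝ)+1) * π
      = (l:ℝ) * π / ((p:ℝ)+1) + eps (p+1) l * π / ((p:ℝ)+1) := by ring
  have e2 : ((l:ℝ) - eps p l) / (p:ℝ) * π
      = (l:ℝ) * π / (p:ℝ) - eps p l * π / (p:ℝ) := by ring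
  linarith [this, e1 ▸ this]

/-- `J_{p+1,l+1} ≺ J_{p,l}` at the level of angle intervals. -/
lemma sepA {p l : ℕ} (hp : 2 ≤ p) (h1 : 1 ≤ l) (h2 : l < p) : JHi p l < JLo (p+1) (l+1) := by
  have hA := arithA hp h1 h2
  have hp0 : (0:ℝ) < p := by
    have : 0 < p := by omega
    exact_mod_cast this
  have hp1 : (0:ℝ) < (p:ℝ) + 1 := by linarith
  unfold JHi JLo
  push_cast
  have key : ((l:ℝ) + eps p l) / (p:ℝ) < (((l:ℝ)+1) - eps (p+1) (l+1)) / ((p:ℝ)+1) := by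
    rw [div_lt_div_iff₀ hp0 hp1]
    nlinarith
  have := mul_lt_mul_of_pos_right key pi_pos
  have e1 : ((l:ℝ) + eps p l) / (p:ℝ) * π
      = (l:ℝ) * π / (p:ℝ) + eps p l * π / (p:ℝ) := by ring
  have e2 : (((l:ℝ)+1) - eps (p+1) (l+1)) / ((p:ℝ)+1) * π
      = ((l:ℝ)+1) * π / ((p:ℝ)+1) - eps (p+1) (l+1) * π / ((p:ℝ)+1) := by ring
  linarith [this]

lemma Jset_lt_of_sep {p l q m : ℕ} (h1 : 1 ≤ l) (h2 : l < p) (h1' : 1 ≤ m) (h2' : m < q)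
    (hsep : JHi p l < JLo q m) :
    ∀ x ∈ Jset q m, ∀ y ∈ Jset p l, x < y := by
  intro x hx y hy
  simp only [Jset, Set.mem_image, Set.mem_Icc] at hx hy
  obtain ⟨θ, ⟨hθ1, hθ2⟩, rfl⟩ := hx
  obtain ⟨φ, ⟨hφ1, hφ2⟩, rfl⟩ := hy
  have hφ1' : JLo p l ≤ φ := hφ1
  have hφ2' : φ ≤ JHi p l := hφ2
  have hθ1' : JLo q m ≤ θ := hθ1
  have hθ2' : θ ≤ JHi q m := hθ2
  have h0 : 0 ≤ φ := le_of_lt (lt_of_lt_of_le (JLo_pos h1 h2) hφ1')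
  have hπθ : θ ≤ π := le_trans hθ2' (JHi_le_pi h2')
  have hlt : φ < θ := lt_of_le_of_lt hφ2' (lt_of_lt_of_le hsep hθ1')
  have := Real.cos_lt_cos_of_nonneg_of_le_pi h0 hπθ hlt
  linarith

lemma disj_of_sep {p l q m : ℕ} (h1 : 1 ≤ l) (h2 : l < p) (h1' : 1 ≤ m) (h2' : m < q)
    (hsep : JHi p l < JLo q m) : Disjoint (Jset p l) (Jset q m) := by
  rw [Set.disjoint_left]
  intro x hx hx'
  exact lt_irrefl x (Jset_lt_of_sep h1 h2 h1' h2' hsep x hx' x hx)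

/-- Enumeration of the family `𝒥_p`, ordered by increasing angle. -/
def cIdx (p k : ℕ) : ℕ × ℕ := if k % 2 = 0 then (p+1, k/2+1) else (p, k/2+1)

lemma cIdx_valid {p k : ℕ} (hp : 2 ≤ p) (hk : k ≤ 2*p-2) :
    1 ≤ (cIdx p k).2 ∧ (cIdx p k).2 < (cIdx p k).1 := by
  unfold cIdx; split <;> (dsimp only; omega)

lemma chain_adj {p : ℕ} (hp : 2 ≤ p) {k : ℕ} (hk : k + 1 ≤ 2*p - 2) :
    JHi (cIdx p k).1 (cIdx p k).2 < JLo (cIdx p (k+1)).1 (cIdx p (k+1)).2 := by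
  rcases Nat.even_or_odd k with ⟨j, hj⟩ | ⟨j, hj⟩
  · subst hj
    have e1 : cIdx p (j+j) = (p+1, j+1) := by
      unfold cIdx
      rw [if_pos (by omega)]
      have : (j+j)/2 = j := by omega
      rw [this]
    have e2 : cIdx p (j+j+1) = (p, j+1) := by
      unfold cIdx
      rw [if_neg (by omega)]
      have : (j+j+1)/2 = j := by omega
      rw [this]
    rw [e1, e2]
    exact sepB hp (by omega) (by omega)
  · subst hj
    have e1 : cIdx p (2*j+1) = (p, j+1) := by
      unfold cIdx
      rw [if_neg (by omega)]
      have : (2*j+1)/2 = j := by omega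
      rw [this]
    have e2 : cIdx p (2*j+1+1) = (p+1, j+2) := by
      unfold cIdx
      rw [if_pos (by omega)]
      have : (2*j+1+1)/2 = j+1 := by omega
      rw [this]
    rw [e1, e2]
    exact sepA hp (by omega) (by omega)

lemma chain_lt {p : ℕ} (hp : 2 ≤ p) :
    ∀ k, k ≤ 2*p-2 → ∀ j, j < k →
      JHi (cIdx p j).1 (cIdx p j).2 < JLo (cIdx p k).1 (cIdx p k).2 := by
  intro k
  induction k with
  | zero => intro _ j hj; omega
  | succ n ih =>
    intro hk j hj
    rcases Nat.lt_or_ge j n with h | h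
    · have h1 := ih (by omega) j h
      have hv := cIdx_valid hp (k := n) (by omega)
      have h2 : JLo (cIdx p n).1 (cIdx p n).2 ≤ JHi (cIdx p n).1 (cIdx p n).2 :=
        JLo_le_JHi hv.2
      have h3 := chain_adj hp (k := n) (by omega)
      linarith
    · have : j = n := by omega
      subst this
      exact chain_adj hp (by omega)

/-- For `p ≥ 2` and `1 ≤ l < p` one has the interlacing order
`J_{p+1,l+1} ≺ J_{p,l} ≺ J_{p+1,l}`; in particular the intervals of the family
`𝒥_p` are pairwise disjoint. -/
theorem Jset_interlaced (p : ℕ) (hp : 2 ≤ p) :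
    (∀ l, 1 ≤ l → l < p →
      (∀ x ∈ Jset (p + 1) (l + 1), ∀ y ∈ Jset p l, x < y) ∧
      (∀ y ∈ Jset p l, ∀ z ∈ Jset (p + 1) l, y < z)) ∧
    (Jfamily p).Pairwise Disjoint := by
  constructor
  · intro l h1 h2
    constructor
    · exact Jset_lt_of_sep h1 h2 (by omega) (by omega) (sepA hp h1 h2)
    · exact Jset_lt_of_sep (by omega) (by omega) h1 h2 (sepB hp h1 h2)
  · intro S hS T hT hne
    have ext : ∀ U ∈ Jfamily p, ∃ k, k ≤ 2*p-2 ∧ U = Jset (cIdx p k).1 (cIdx p k).2 := by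
      intro U hU
      simp only [Jfamily, Set.mem_setOf_eq] at hU
      rcases hU with ⟨l, h1, h2, rfl⟩ | ⟨l, h1, h2, rfl⟩
      · refine ⟨2*l-1, by omega, ?_⟩
        have e : cIdx p (2*l-1) = (p, l) := by
          unfold cIdx
          rw [if_neg (by omega)]
          have : (2*l-1)/2 + 1 = l := by omega
          rw [this]
        rw [e]
      · refine ⟨2*l-2, by omega, ?_⟩
        have e : cIdx p (2*l-2) = (p+1, l) := by
          unfold cIdx
          rw [if_pos (by omega)]
          have : (2*l-2)/2 + 1 = l := by omega
          rw [this]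
        rw [e]
    obtain ⟨k1, hk1, hS1⟩ := ext S hS
    obtain ⟨k2, hk2, hS2⟩ := ext T hT
    have v1 := cIdx_valid hp hk1
    have v2 := cIdx_valid hp hk2
    rcases lt_trichotomy k1 k2 with h | h | h
    · rw [hS1, hS2]
      exact disj_of_sep v1.1 v1.2 v2.1 v2.2 (chain_lt hp k2 hk2 k1 h)
    · exact absurd (by rw [hS1, h, ← hS2]) hne
    · rw [hS1, hS2]
      exact (disj_of_sep v2.1 v2.2 v1.1 v1.2 (chain_lt hp k1 hk1 k2 h)).symm
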